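/- Let c ∈ A be a nonzero idempotent. Then the following are equivalent: (a) Q_c(x) = 0 for every x ∈ A; (b) A = Fc ⊕ A_0(c) ⊕ A_{1/2}(c) as an internal direct sum of F-subspaces, and (c,c) = 1. -/

import Mathlib

/-- `A_0(z)`: the set of elements `x` with `z * x = 0`. -/
def A0 (F : Type*) {A : Type*} [Field F] [NonUnitalNonAssocCommRing A] [Module F A]
    (z : A) : Set A :=
  {x | z * x = 0}

/-- `A_{1/2}(z)`: the set of elements `x` with `z * x = (1/2) • x`. -/
def Ahalf (F : Type*) {A : Type*} [Field F] [NonUnitalNonAssocCommRing A] [Module F A]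
    (z : A) : Set A :=
  {x | z * x = (1/2 : F) • x}

/-- `w0` is the `A_0(a)`-component of `w` in the decomposition
`A = F•a ⊕ A_0(a) ⊕ A_{1/2}(a)`. -/
def IsZeroPart (F : Type*) {A : Type*} [Field F] [NonUnitalNonAssocCommRing A] [Module F A]
    (a w w0 : A) : Prop :=
  w0 ∈ A0 F a ∧ ∃ (α : F) (wh : A), wh ∈ Ahalf F a ∧ w = α • a + w0 + wh

variable {F A : Type*} [Field F] [NonUnitalNonAssocCommRing A] [Module F A]
  [SMulCommClass F A A] [IsScalarTower F A A]

/-- `c` is a primitive axis of Jordan type `1/2` with respect to the Frobenius form `B`: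
`c` is an idempotent of norm `1`, `A = F•c ⊕ A_0(c) ⊕ A_{1/2}(c)` as an internal direct
sum of `F`-subspaces, and the fusion rules hold. -/
structure IsAxis (B : A →ₗ[F] A →ₗ[F] F) (c : A) : Prop where
  idem : c * c = c
  norm : B c c = 1
  decomp : ∀ x : A, ∃ (α : F) (x0 : A), x0 ∈ A0 F c ∧ ∃ xh ∈ Ahalf F c, x = α • c + x0 + xh
  indep : ∀ (α : F) (x0 xh : A), x0 ∈ A0 F c → xh ∈ Ahalf F c →
      α • c + x0 + xh = 0 → α = 0 ∧ x0 = 0 ∧ xh = 0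
  fusion00 : ∀ x ∈ A0 F c, ∀ y ∈ A0 F c, x * y ∈ A0 F c
  fusion0h : ∀ x ∈ A0 F c, ∀ y ∈ Ahalf F c, x * y ∈ Ahalf F c
  fusionhh : ∀ x ∈ Ahalf F c, ∀ y ∈ Ahalf F c, ∃ (α : F) (z : A), z ∈ A0 F c ∧ x * y = α • c + z

theorem statement0 (B : A →ₗ[F] A →ₗ[F] F)
    (hsymm : ∀ x y : A, B x y = B y x)
    (hfrob : ∀ x y z : A, B (x * y) z = B x (y * z))
    (h2 : (2 : F) ≠ 0)
    (c : A) (hc : c ≠ 0) (hidem : c * c = c) :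
    (∀ x : A, c * (c * x) - (1/2 : F) • (c * x + B c x • c) = 0) ↔
      ((∀ x : A, ∃ (α : F) (x0 : A), x0 ∈ A0 F c ∧ ∃ xh ∈ Ahalf F c, x = α • c + x0 + xh) ∧
        (∀ (α : F) (x0 xh : A), x0 ∈ A0 F c → xh ∈ Ahalf F c →
          α • c + x0 + xh = 0 → α = 0 ∧ x0 = 0 ∧ xh = 0) ∧
        B c c = 1) := by
  have h4 : (4 : F) ≠ 0 := by
    have : (4 : F) = 2 * 2 := by norm_num
    rw [this]; exact mul_ne_zero h2 h2
  have h4ne : (1/4 : F) ≠ 0 := one_div_ne_zero h4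
  constructor
  · intro hQ
    have hBcc : B c c = 1 := by
      have h := hQ c
      rw [hidem, hidem] at h
      have h' : (1 - (1/2 : F) - (1/2) * B c c) • c = 0 := by
        rw [← h]; module
      rcases smul_eq_zero.mp h' with h'' | h''
      · field_simp at h''; linear_combination -h''
      · exact absurd h'' hc
    refine ⟨?_, ?_, hBcc⟩
    · intro x
      set α := B c x with hα
      set y := x - α • c with hy
      have hBy : B c y = 0 := by
        rw [hy, map_sub, map_smul, hBcc, smul_eq_mul, mul_one, sub_self]
      have hQy := hQ y
      rw [hBy, zero_smul, add_zero] at hQy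
      have hcc : c * (c * y) = (1/2 : F) • (c * y) := sub_eq_zero.mp hQy
      refine ⟨α, y - (2:F) • (c * y), ?_, (2:F) • (c * y), ?_, ?_⟩
      · show c * (y - (2:F) • (c * y)) = 0
        rw [mul_sub, mul_smul_comm, hcc]
        match_scalars <;> field_simp <;> ring
      · show c * ((2:F) • (c * y)) = (1/2 : F) • ((2:F) • (c * y))
        rw [mul_smul_comm, hcc]
        match_scalars <;> field_simp
      · rw [hy]; module
    · intro α x0 xh hx0 hxh heq
      have hx0' : c * x0 = 0 := hx0
      have hxh' : c * xh = (1/2 : F) • xh := hxh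
      have h1 : α • c + (1/2 : F) • xh = 0 := by
        have h1' : c * (α • c + x0 + xh) = c * 0 := by rw [heq]
        rw [mul_zero, mul_add, mul_add, mul_smul_comm, hidem, hx0', hxh', add_zero] at h1'
        exact h1'
      have h2' : α • c + (1/4 : F) • xh = 0 := by
        have h2'' : c * (α • c + (1/2 : F) • xh) = c * 0 := by rw [h1]
        rw [mul_zero, mul_add, mul_smul_comm, mul_smul_comm, hidem, hxh'] at h2''
        rw [← h2'']
        match_scalars <;> field_simp <;> ring
      have hxh0 : xh = 0 := by
        have hsub : (1/4 : F) • xh = 0 := by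
          have hd := sub_eq_zero.mpr (h1.trans h2'.symm)
          rw [← hd]
          match_scalars <;> field_simp <;> ring
        rcases smul_eq_zero.mp hsub with h | h
        · exact absurd h h4ne
        · exact h
      have hα0 : α = 0 := by
        have hz : α • c = 0 := by rw [hxh0, smul_zero, add_zero] at h1; exact h1
        rcases smul_eq_zero.mp hz with h | h
        · exact h
        · exact absurd h hc
      refine ⟨hα0, ?_, hxh0⟩
      rw [hα0, hxh0, zero_smul, zero_add, add_zero] at heq
      exact heq
  · rintro ⟨hdec, hind, hBcc⟩ x
    obtain ⟨α, x0, hx0, xh, hxh, hx⟩ := hdec x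
    have hx0' : c * x0 = 0 := hx0
    have hxh' : c * xh = (1/2 : F) • xh := hxh
    have hB0 : B c x0 = 0 := by
      have h := hfrob c c x0
      rw [hidem, hx0', map_zero] at h
      exact h
    have hBh : B c xh = 0 := by
      have h := hfrob c c xh
      rw [hidem, hxh', map_smul, smul_eq_mul] at h
      have h' : (2:F) * B c xh = 2 * (1/2 * B c xh) := by rw [← h]
      field_simp at h'
      linear_combination h'
    have hBx : B c x = α := by
      rw [hx, map_add, map_add, map_smul, hB0, hBh, hBcc, smul_eq_mul, mul_one, add_zero,
        add_zero]
    have hcx : c * x = α • c + (1/2 : F) • xh := by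
      rw [hx, mul_add, mul_add, mul_smul_comm, hidem, hx0', hxh']; module
    have hccx : c * (c * x) = α • c + (1/4 : F) • xh := by
      rw [hcx, mul_add, mul_smul_comm, mul_smul_comm, hidem, hxh']
      match_scalars <;> field_simp <;> ring
    rw [hccx, hcx, hBx]
    match_scalars <;> field_simp <;> ring
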